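/- Let f be a Laurent polynomial in n variables and A a vertex of its Newton polytope, so f = λ_A t^A (1 − h) with λ_A ≠ 0. Then for every monomial t^m, only finitely many of the powers hⁱ contain t^m with nonzero coefficient; hence the series λ_A⁻¹ t^{−A}(1 + h + h² + ⋯) is a well-defined formal power series (the Laurent expansion of 1/f at the vertex A). -/

import Mathlib

/-- A Laurent polynomial in `n` variables: an element of the monoid algebra of `ℂ`
over the lattice `ℤⁿ` of exponents; its value at `k` is the coefficient of `tᵏ`. -/
noncomputable abbrev MvLaurent (n : ℕ) := AddMonoidAlgebra ℂ (Fin n → ℤ)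

/-- The Newton polytope of a Laurent polynomial: the convex hull in ℝⁿ of its
exponents with nonzero coefficient. -/
noncomputable def newtonPolytope {n : ℕ} (f : MvLaurent n) : Set (Fin n → ℝ) :=
  convexHull ℝ ((fun k : Fin n → ℤ => fun i => (k i : ℝ)) '' ↑f.coeff.support)

/-- Let `f` be a Laurent polynomial in `n` variables and `A` a vertex (extreme point)
of its Newton polytope, and write `f = λ_A t^A (1 − h)`, i.e.
`h = 1 − (λ_A)⁻¹ t^(−A) f` (so `h k = −(λ_A)⁻¹ · f(k+A)` for `k ≠ 0` and `h 0 = 0`).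
Then for every monomial `tᵐ`, only finitely many powers `hⁱ` contain `tᵐ` with a
nonzero coefficient; hence `λ_A⁻¹ t^(−A)(1 + h + h² + ⋯)` is a well-defined formal
power series (the Laurent expansion of `1/f` at the vertex `A`). -/
theorem laurent_expansion_at_vertex_well_defined {n : ℕ}
    (f : MvLaurent n) (A : Fin n → ℤ)
    (hA : (fun i => (A i : ℝ)) ∈ Set.extremePoints ℝ (newtonPolytope f))
    (h : MvLaurent n)
    (hdef : ∀ k : Fin n → ℤ, h.coeff k = if k = 0 then 0 else -(f.coeff A)⁻¹ * f.coeff (k + A)) :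
    ∀ m : Fin n → ℤ, {i : ℕ | (h ^ i).coeff m ≠ 0}.Finite := by
  classical
  -- the cast map ℤⁿ → ℝⁿ
  set c : (Fin n → ℤ) → (Fin n → ℝ) := fun k => fun i => (k i : ℝ) with hc
  have cadd : ∀ a b : Fin n → ℤ, c (a + b) = c a + c b := by
    intro a b; funext i; simp [c]
  have cinj : Function.Injective c := by
    intro a b hab
    funext i
    have := congrFun hab i
    simp only [c] at this
    exact_mod_cast this
  set S : Set (Fin n → ℝ) := c '' ↑f.coeff.support with hS
  set Ar : Fin n → ℝ := c A with hAr
  have hSfin : S.Finite := (f.coeff.support.finite_toSet).image _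
  -- A is not in the convex hull of the other exponents
  have hnot : Ar ∉ convexHull ℝ (S \ {Ar}) := by
    have hA' : Ar ∈ (convexHull ℝ S).extremePoints ℝ := hA
    have h1 := (convex_convexHull ℝ S).mem_extremePoints_iff_mem_diff_convexHull_diff.mp hA'
    intro hmem
    apply h1.2
    refine convexHull_mono ?_ hmem
    intro x hx
    exact ⟨subset_convexHull ℝ _ hx.1, hx.2⟩
  -- separate
  obtain ⟨ℓ, u, hu1, hu2⟩ := geometric_hahn_banach_point_closed
    (convex_convexHull ℝ (S \ {Ar}))
    (((hSfin.diff (t := {Ar})).isCompact_convexHull (𝕜 := ℝ)).isClosed) hnot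
  set δ : ℝ := u - ℓ Ar with hδ
  have hδpos : 0 < δ := sub_pos.mpr hu1
  -- support of h
  have hsupp : ∀ k ∈ h.coeff.support, δ ≤ ℓ (c k) := by
    intro k hk
    rw [Finsupp.mem_support_iff, hdef k] at hk
    have hk0 : k ≠ 0 := by intro h0; simp [h0] at hk
    have hf : f.coeff (k + A) ≠ 0 := by
      intro h0; simp [h0] at hk
    have hmem : c (k + A) ∈ convexHull ℝ (S \ {Ar}) := by
      apply subset_convexHull
      refine ⟨⟨k + A, Finsupp.mem_support_iff.mpr hf, rfl⟩, ?_⟩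
      simp only [Set.mem_singleton_iff]
      intro heq
      apply hk0
      have : c (k + A) = c (0 + A) := by simpa [cadd, hAr] using heq
      simpa using cinj this
    have := hu2 _ hmem
    have hlin : ℓ (c (k + A)) = ℓ (c k) + ℓ Ar := by
      rw [cadd]; exact map_add ℓ _ _
    rw [hlin] at this
    linarith
  -- support of h^i
  have key : ∀ i : ℕ, ∀ m ∈ (h ^ i).coeff.support, (i : ℝ) * δ ≤ ℓ (c m) := by
    intro i
    induction i with
    | zero =>
      intro m hm
      have : m = 0 := by
        rw [pow_zero] at hm
        simpa using AddMonoidAlgebra.support_coeff_one_subset hm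
      subst this
      simp [c]
      have : (fun i : Fin n => (0 : ℝ)) = (0 : Fin n → ℝ) := rfl
      rw [this, map_zero]
    | succ i ih =>
      intro m hm
      rw [pow_succ] at hm
      have := AddMonoidAlgebra.support_coeff_mul_subset (h ^ i) h hm
      rw [Finset.mem_add] at this
      obtain ⟨a, ha, b, hb, rfl⟩ := this
      have h1 := ih a ha
      have h2 := hsupp b hb
      have : ℓ (c (a + b)) = ℓ (c a) + ℓ (c b) := by rw [cadd]; exact map_add ℓ _ _
      rw [this]
      push_cast
      nlinarith
  -- conclude finiteness
  intro m
  apply Set.Finite.subset (Set.finite_Iic ⌈ℓ (c m) / δ⌉₊)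
  intro i hi
  simp only [Set.mem_setOf_eq] at hi
  have hm : m ∈ (h ^ i).coeff.support := Finsupp.mem_support_iff.mpr hi
  have := key i m hm
  have h1 : (i : ℝ) ≤ ℓ (c m) / δ := by
    rw [le_div_iff₀ hδpos]
    linarith
  have h2 : (i : ℝ) ≤ (⌈ℓ (c m) / δ⌉₊ : ℝ) := le_trans h1 (Nat.le_ceil _)
  exact Set.mem_Iic.mpr (Nat.cast_le.mp h2)
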